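/- For s ≥ 1 and m,n ≥ 0, ∂_{z,0}(A_s B̄_m e_z A_n) = A_s Ā_m e_z A_n − A_s B̄_{m+n} in ℚ⟨e_0,e_1,e_z⟩, where A_n = (e_1e_0)^n, Ā_n = (e_0e_1)^n, B̄_n = (e_0e_1)^n e_0. -/

import Mathlib

open scoped BigOperators
open MeasureTheory Filter

noncomputable section

/-- Iterated integral over the open simplex `0 < t₁ < ⋯ < t_m < 1` of `∏ᵢ 1/(tᵢ - aᵢ)`. -/
def itInt (a : List ℂ) : ℂ :=
  ∫ t in {t : Fin a.length → ℝ | StrictMono t ∧ ∀ i, t i ∈ Set.Ioo (0:ℝ) 1},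
    ∏ i : Fin a.length, ((t i : ℂ) - a.get i)⁻¹

/-- Multiple zeta value attached to a list of exponents. -/
def mzv (k : List ℕ) : ℝ :=
  ∑' f : {f : Fin k.length → ℕ+ // StrictMono f},
    ∏ i : Fin k.length, (((f.1 i : ℕ) : ℝ) ^ (k.get i))⁻¹

/-- Letters: `0 ↦ e₀`, `1 ↦ e₁`, `2 ↦ e_z`. -/
abbrev Ltr := Fin 3

/-- The free noncommutative algebra `ℚ⟨e₀,e₁,e_z⟩` realized as a monoid algebra. -/
abbrev Alg := MonoidAlgebra ℚ (FreeMonoid Ltr)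

/-- The word (monomial) corresponding to a list of letters. -/
def wd (l : List Ltr) : Alg := MonoidAlgebra.of ℚ (FreeMonoid Ltr) (FreeMonoid.ofList l)

/-- Padded letter sequence: `a₀ = 0`, `a_{n+1} = 1`. -/
def pad (l : List Ltr) : ℕ → Ltr := fun i => (((0:Ltr) :: (l ++ [1])).getD i 0)

/-- Unordered-pair Kronecker delta. -/
def dl (a b c d : Ltr) : ℚ := if (a = c ∧ b = d) ∨ (a = d ∧ b = c) then 1 else 0

/-- `∂_{z,b}` on a single word. -/
def delWord (b : Ltr) (l : List Ltr) : Alg :=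
  ∑ i ∈ Finset.range l.length,
    (dl (pad l (i+1)) (pad l (i+2)) 2 b - dl (pad l i) (pad l (i+1)) 2 b) •
      wd (l.eraseIdx i)

/-- The linear operator `∂_{z,b}` on `ℚ⟨e₀,e₁,e_z⟩`. -/
def del (b : Ltr) : Alg →ₗ[ℚ] Alg :=
  Finsupp.lift Alg ℚ (FreeMonoid Ltr) (fun l => delWord b (FreeMonoid.toList l))
    ∘ₗ (MonoidAlgebra.coeffLinearEquiv ℚ).toLinearMap

/-- Evaluation of letters at a point `z`. -/
def ev (z : ℂ) : Ltr → ℂ := fun i => if i = 0 then 0 else if i = 1 then 1 else z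

/-- The linear map `L` (depending on `z`) given by iterated integrals. -/
def LL (z : ℂ) : Alg →ₗ[ℚ] ℂ :=
  Finsupp.lift ℂ ℚ (FreeMonoid Ltr) (fun l => itInt ((FreeMonoid.toList l).map (ev z)))
    ∘ₗ (MonoidAlgebra.coeffLinearEquiv ℚ).toLinearMap

/-- `A_n = (e₁e₀)^n`. -/
def Aw : ℕ → List Ltr
  | 0 => []
  | n+1 => 1 :: 0 :: Aw n

/-- `B_n = (e₁e₀)^n e₁`. -/
def Bw (n : ℕ) : List Ltr := Aw n ++ [1]

/-- `Ā_n = (e₀e₁)^n`. -/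
def Abar : ℕ → List Ltr
  | 0 => []
  | n+1 => 0 :: 1 :: Abar n

/-- `B̄_n = (e₀e₁)^n e₀`. -/
def Bbar (n : ℕ) : List Ltr := Abar n ++ [0]

/-- The single letter `e_z`. -/
def ezw : List Ltr := [2]

/-- Flip `e₀ ↔ e₁` (fixing `e_z`, which never occurs in duality words). -/
def flipL : Ltr → Ltr := fun i => if i = 0 then 1 else if i = 1 then 0 else 2

/-- The duality anti-automorphism `τ` as a linear map. -/
def tau : Alg →ₗ[ℚ] Alg :=
  Finsupp.lift Alg ℚ (FreeMonoid Ltr)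
    (fun l => ((-1 : ℚ) ^ (FreeMonoid.toList l).length) •
      wd (((FreeMonoid.toList l).reverse).map flipL))
    ∘ₗ (MonoidAlgebra.coeffLinearEquiv ℚ).toLinearMap

/-- `Δ(w) = w - τ(w)`. -/
def Del (x : Alg) : Alg := x - tau x

/-- The segment `[0,1] ⊂ ℂ`. -/
def seg : Set ℂ := (fun t : ℝ => (t : ℂ)) '' Set.Icc 0 1

/-- Admissibility of a word: it is empty, or starts with `e₁` or `e_z`
and ends with `e₀` or `e_z`. -/
def adm (l : List Ltr) : Prop :=
  ∀ h : l ≠ [], (l.head h = 1 ∨ l.head h = 2) ∧ (l.getLast h = 0 ∨ l.getLast h = 2)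

/-- The subspace `𝒜¹` spanned by admissible words. -/
def A1 : Submodule ℚ Alg := Submodule.span ℚ {x | ∃ l, adm l ∧ x = wd l}

/-- The span of words containing the letter `e_z` (the ideal `ℐ = 𝒜e_z𝒜`). -/
def Iz : Submodule ℚ Alg := Submodule.span ℚ {x | ∃ l : List Ltr, (2:Ltr) ∈ l ∧ x = wd l}

/-- `F_{ee}(m,n)`. -/
def Fee (s : ℕ) (m n : ℤ) : Alg :=
  if m < 0 ∨ n < 0 then 0 else
  wd (Aw s ++ Bbar m.toNat ++ ezw ++ Aw n.toNat)
    + wd (Aw m.toNat ++ ezw ++ Aw s ++ ezw ++ Aw n.toNat)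
    + wd (Aw m.toNat ++ ezw ++ Abar s ++ ezw ++ Aw n.toNat)
    + wd (Aw m.toNat ++ ezw ++ Bw n.toNat ++ Aw s)
    - wd (Bw (s + m.toNat) ++ ezw ++ Aw n.toNat)
    - wd (Aw m.toNat ++ ezw ++ Bbar (s + n.toNat))

/-- `F_{oe}(m,n)`. -/
def Foe (s : ℕ) (m n : ℤ) : Alg :=
  if m < 0 ∨ n < 0 then 0 else
  wd (Aw s ++ Abar (m.toNat + 1) ++ ezw ++ Aw n.toNat)
    + wd (Bw m.toNat ++ ezw ++ Aw s ++ ezw ++ Aw n.toNat)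
    + wd (Bw m.toNat ++ ezw ++ Abar s ++ ezw ++ Aw n.toNat)
    + wd (Bw m.toNat ++ ezw ++ Bw n.toNat ++ Aw s)
    - wd (Aw (s + m.toNat + 1) ++ ezw ++ Aw n.toNat)
    - wd (Bw m.toNat ++ ezw ++ Bbar (s + n.toNat))

/-- `F_{eo}(m,n)`. -/
def Feo (s : ℕ) (m n : ℤ) : Alg :=
  if m < 0 ∨ n < 0 then 0 else
  wd (Aw s ++ Bbar m.toNat ++ ezw ++ Bbar n.toNat)
    + wd (Aw m.toNat ++ ezw ++ Aw s ++ ezw ++ Bbar n.toNat)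
    + wd (Aw m.toNat ++ ezw ++ Abar s ++ ezw ++ Bbar n.toNat)
    + wd (Aw m.toNat ++ ezw ++ Abar (n.toNat + 1) ++ Aw s)
    - wd (Bw (s + m.toNat) ++ ezw ++ Bbar n.toNat)
    - wd (Aw m.toNat ++ ezw ++ Aw (s + n.toNat + 1))

/-- `F_{oo}(m,n)`. -/
def Foo (s : ℕ) (m n : ℤ) : Alg :=
  if m < 0 ∨ n < 0 then 0 else
  wd (Aw s ++ Abar (m.toNat + 1) ++ ezw ++ Bbar n.toNat)
    + wd (Bw m.toNat ++ ezw ++ Aw s ++ ezw ++ Bbar n.toNat)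
    + wd (Bw m.toNat ++ ezw ++ Abar s ++ ezw ++ Bbar n.toNat)
    + wd (Bw m.toNat ++ ezw ++ Abar (n.toNat + 1) ++ Aw s)
    - wd (Aw (s + m.toNat + 1) ++ ezw ++ Bbar n.toNat)
    - wd (Bw m.toNat ++ ezw ++ Aw (s + n.toNat + 1))

lemma wd_append (a b : List Ltr) : wd (a ++ b) = wd a * wd b := by
  simp [wd, MonoidAlgebra.of_apply, MonoidAlgebra.single_mul_single,
    FreeMonoid.ofList_append]

lemma wd_nil : wd [] = 1 := rfl

lemma del_wd (b : Ltr) (l : List Ltr) : del b (wd l) = delWord b l := by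
  rw [del, wd, MonoidAlgebra.of_apply]
  rw [LinearMap.comp_apply]
  rw [show (MonoidAlgebra.coeffLinearEquiv ℚ).toLinearMap
      (MonoidAlgebra.single (FreeMonoid.ofList l) (1:ℚ)) =
    Finsupp.single (FreeMonoid.ofList l) (1:ℚ) from rfl]
  erw [Finsupp.lift_apply, Finsupp.sum_single_index (by simp)]
  simp

lemma dl_one_left (x : Ltr) : dl 1 x 2 0 = 0 := by simp [dl]

lemma dl_one_right (x : Ltr) : dl x 1 2 0 = 0 := by simp [dl]

lemma dl_zero_left (x : Ltr) (h : x ≠ 2) : dl 0 x 2 0 = 0 := by simp [dl, h]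

lemma pad_zero (l : List Ltr) : pad l 0 = 0 := by simp [pad]

lemma pad_shift0 (x : Ltr) (l : List Ltr) (i : ℕ) :
    pad (x :: 0 :: l) (i + 2) = pad l i := by
  cases i with
  | zero => simp [pad]
  | succ j => simp [pad]

lemma pad_shift1 (x : Ltr) (l : List Ltr) (i : ℕ) :
    pad (x :: 1 :: l) (i + 3) = pad l (i + 1) := by
  simp [pad]

lemma eraseIdx_append_lt : ∀ (l r : List Ltr) (i : ℕ), i < l.length →
    (l ++ r).eraseIdx i = l.eraseIdx i ++ r := by
  intro l
  induction l with
  | nil => intro r i h; simp at h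
  | cons a t ih =>
    intro r i h
    cases i with
    | zero => simp [List.eraseIdx]
    | succ j =>
      simp only [List.cons_append, List.eraseIdx_cons_succ, List.cons_append]
      rw [ih r j (by simpa using h)]

lemma pad_append10 (l : List Ltr) (i : ℕ) (h : i < l.length + 2) :
    pad (l ++ [1, 0]) i = pad l i := by
  rw [pad, pad]
  have h1 : (0 : Ltr) :: (l ++ [1, 0] ++ [1]) = ((0 : Ltr) :: (l ++ [1])) ++ [0, 1] := by
    simp
  rw [h1, List.getD_append]
  simp; omega

lemma peel10 (l : List Ltr) (h : pad l 1 ≠ 2) :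
    delWord 0 (1 :: 0 :: l) = wd [1, 0] * delWord 0 l := by
  rw [delWord, delWord]
  rw [show (1 :: 0 :: l : List Ltr).length = l.length + 1 + 1 from rfl]
  rw [Finset.sum_range_succ', Finset.sum_range_succ']
  have h0 : (dl (pad (1::0::l : List Ltr) 1) (pad (1::0::l : List Ltr) 2) 2 0
      - dl (pad (1::0::l : List Ltr) 0) (pad (1::0::l : List Ltr) 1) 2 0) = 0 := by
    simp [pad, dl]
  have h1 : (dl (pad (1::0::l : List Ltr) 2) (pad (1::0::l : List Ltr) 3) 2 0
      - dl (pad (1::0::l : List Ltr) 1) (pad (1::0::l : List Ltr) 2) 2 0) = 0 := by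
    have : pad (1::0::l : List Ltr) 3 = pad l 1 := pad_shift0 1 l 1
    rw [this]
    have : pad (1::0::l : List Ltr) 2 = pad l 0 := pad_shift0 1 l 0
    rw [this, pad_zero]
    rw [dl_zero_left _ h]
    simp [pad, dl]
  simp only [h0, h1, zero_smul, add_zero]
  rw [Finset.mul_sum]
  refine Finset.sum_congr rfl fun i _ => ?_
  rw [pad_shift0, pad_shift0, pad_shift0]
  rw [show (1::0::l : List Ltr).eraseIdx (i+1+1) = 1 :: 0 :: l.eraseIdx i from rfl]
  rw [mul_smul_comm, ← wd_append]
  rfl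

lemma peel01 (l : List Ltr) (h : pad l 1 ≠ 2) :
    delWord 0 (0 :: 1 :: l) = wd [0, 1] * delWord 0 l := by
  rw [delWord, delWord]
  rw [show (0 :: 1 :: l : List Ltr).length = l.length + 1 + 1 from rfl]
  rw [Finset.sum_range_succ', Finset.sum_range_succ']
  have h0 : (dl (pad (0::1::l : List Ltr) 1) (pad (0::1::l : List Ltr) 2) 2 0
      - dl (pad (0::1::l : List Ltr) 0) (pad (0::1::l : List Ltr) 1) 2 0) = 0 := by
    simp [pad, dl]
  have h1 : (dl (pad (0::1::l : List Ltr) 2) (pad (0::1::l : List Ltr) 3) 2 0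
      - dl (pad (0::1::l : List Ltr) 1) (pad (0::1::l : List Ltr) 2) 2 0) = 0 := by
    have e2 : pad (0::1::l : List Ltr) 2 = 1 := by simp [pad]
    rw [e2, dl_one_left]
    simp [pad, dl]
  simp only [h0, h1, zero_smul, add_zero]
  rw [Finset.mul_sum]
  refine Finset.sum_congr rfl fun i _ => ?_
  have herase : (0::1::l : List Ltr).eraseIdx (i+1+1) = 0 :: 1 :: l.eraseIdx i := rfl
  cases i with
  | zero =>
    have e2 : pad (0::1::l : List Ltr) 2 = 1 := by simp [pad]
    have e3 : pad (0::1::l : List Ltr) 3 = pad l 1 := by simp [pad]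
    have e4 : pad (0::1::l : List Ltr) 4 = pad l 2 := pad_shift1 0 l 1
    rw [herase, e2, e3, e4, dl_one_left, pad_zero, dl_zero_left _ h]
    rw [mul_smul_comm, ← wd_append]
    rfl
  | succ j =>
    rw [herase]
    rw [show j+1+1+1 = j+3 from rfl, show j+1+1+1+1 = (j+1)+3 from rfl,
      show j+1+1+2 = (j+1)+3 from rfl, show j+1+2 = j+3 from rfl]
    rw [pad_shift1, pad_shift1, pad_shift1]
    rw [mul_smul_comm, ← wd_append]
    rfl

lemma peelR (l : List Ltr) :
    delWord 0 (l ++ [1, 0]) = delWord 0 l * wd [1, 0] := by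
  rw [delWord, delWord]
  have hlen : (l ++ [1, 0] : List Ltr).length = l.length + 1 + 1 := by simp
  rw [hlen]
  rw [Finset.sum_range_succ, Finset.sum_range_succ]
  have e1 : pad (l ++ [1, 0]) (l.length + 1) = 1 := by
    rw [pad]
    have : (0 : Ltr) :: (l ++ [1, 0] ++ [1]) = ((0 : Ltr) :: l) ++ [1, 0, 1] := by simp
    rw [this, List.getD_append_right]
    · simp
    · simp
  have e2 : pad (l ++ [1, 0]) (l.length + 2) = 0 := by
    rw [pad]
    have : (0 : Ltr) :: (l ++ [1, 0] ++ [1]) = ((0 : Ltr) :: l) ++ [1, 0, 1] := by simp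
    rw [this, List.getD_append_right]
    · simp
    · simp
  have e3 : pad (l ++ [1, 0]) (l.length + 3) = 1 := by
    rw [pad]
    have : (0 : Ltr) :: (l ++ [1, 0] ++ [1]) = ((0 : Ltr) :: l) ++ [1, 0, 1] := by simp
    rw [this, List.getD_append_right]
    · simp [List.getD]
    · simp
  have c1 : (dl (pad (l ++ [1,0]) (l.length+1)) (pad (l ++ [1,0]) (l.length+1+1)) 2 0
      - dl (pad (l ++ [1,0]) l.length) (pad (l ++ [1,0]) (l.length+1)) 2 0) = 0 := by
    rw [show l.length+1+1 = l.length+2 from rfl, e1, e2, dl_one_right]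
    simp [dl]
  have c2 : (dl (pad (l ++ [1,0]) (l.length+1+1)) (pad (l ++ [1,0]) (l.length+1+2)) 2 0
      - dl (pad (l ++ [1,0]) (l.length+1)) (pad (l ++ [1,0]) (l.length+1+1)) 2 0) = 0 := by
    rw [show l.length+1+1 = l.length+2 from rfl, show l.length+1+2 = l.length+3 from rfl,
      e1, e2, e3, dl_one_right]
    simp [dl]
  rw [c1, c2, zero_smul, zero_smul, add_zero, add_zero, Finset.sum_mul]
  refine Finset.sum_congr rfl fun i hi => ?_
  rw [Finset.mem_range] at hi
  rw [pad_append10 _ _ (by omega), pad_append10 _ _ (by omega), pad_append10 _ _ (by omega),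
    eraseIdx_append_lt _ _ _ hi, smul_mul_assoc, ← wd_append]
lemma aw_succ_append (n : ℕ) : Aw (n + 1) = Aw n ++ [1, 0] := by
  induction n with
  | zero => rfl
  | succ k ih =>
    show 1 :: 0 :: Aw (k + 1) = (1 :: 0 :: Aw k) ++ [1, 0]
    rw [ih]; rfl

lemma abar_snoc (m : ℕ) : Abar m ++ [0, 1] = Abar (m + 1) := by
  induction m with
  | zero => rfl
  | succ k ih =>
    show (0 :: 1 :: Abar k) ++ [0, 1] = 0 :: 1 :: Abar (k + 1)
    rw [← ih]; rfl

lemma bbar_merge : ∀ (n m : ℕ), Abar m ++ 0 :: Aw n = Bbar (m + n) := by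
  intro n
  induction n with
  | zero => intro m; simp [Bbar, Aw]
  | succ k ih =>
    intro m
    have : (Abar m ++ 0 :: Aw (k+1) : List Ltr) = Abar (m+1) ++ 0 :: Aw k := by
      rw [← abar_snoc]
      simp [Aw]
    rw [this, ih (m+1), show m + 1 + k = m + (k+1) by omega]

lemma base02 : ∀ n : ℕ, delWord 0 (0 :: 2 :: Aw n) = wd (2 :: Aw n) - wd (0 :: Aw n) := by
  intro n
  induction n with
  | zero =>
    show delWord 0 [0, 2] = wd [2] - wd [0]
    rw [delWord]
    rw [show ([0,2] : List Ltr).length = 2 from rfl]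
    rw [Finset.sum_range_succ, Finset.sum_range_succ, Finset.sum_range_zero]
    norm_num [pad, dl, List.eraseIdx]
    simp [sub_eq_add_neg]
  | succ k ih =>
    have e : (0 :: 2 :: Aw (k+1) : List Ltr) = (0 :: 2 :: Aw k) ++ [1, 0] := by
      rw [aw_succ_append]; rfl
    rw [e, peelR, ih, sub_mul, ← wd_append, ← wd_append]
    rw [show (2 :: Aw k : List Ltr) ++ [1,0] = 2 :: Aw (k+1) by rw [aw_succ_append]; rfl]
    rw [show (0 :: Aw k : List Ltr) ++ [1,0] = 0 :: Aw (k+1) by rw [aw_succ_append]; rfl]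

lemma pad1_abar (m : ℕ) (l : List Ltr) : pad (Abar m ++ 0 :: l) 1 = 0 := by
  cases m with
  | zero => simp [Abar, pad]
  | succ k => simp [Abar, pad]

lemma main_abar (m n : ℕ) :
    delWord 0 (Abar m ++ 0 :: 2 :: Aw n) = wd (Abar m) * (wd (2 :: Aw n) - wd (0 :: Aw n)) := by
  induction m with
  | zero => simp [Abar, wd_nil, base02]
  | succ k ih =>
    have e : (Abar (k+1) ++ 0 :: 2 :: Aw n : List Ltr)
        = 0 :: 1 :: (Abar k ++ 0 :: 2 :: Aw n) := rfl
    rw [e, peel01 _ (by rw [pad1_abar]; decide), ih, ← mul_assoc, ← wd_append]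
    rfl

lemma main_aw (s m n : ℕ) :
    delWord 0 (Aw s ++ (Abar m ++ 0 :: 2 :: Aw n)) =
      wd (Aw s) * (wd (Abar m) * (wd (2 :: Aw n) - wd (0 :: Aw n))) := by
  induction s with
  | zero => simp [Aw, wd_nil, main_abar]
  | succ k ih =>
    have e : (Aw (k+1) ++ (Abar m ++ 0 :: 2 :: Aw n) : List Ltr)
        = 1 :: 0 :: (Aw k ++ (Abar m ++ 0 :: 2 :: Aw n)) := rfl
    have hp : pad (Aw k ++ (Abar m ++ 0 :: 2 :: Aw n)) 1 ≠ 2 := by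
      cases k with
      | zero => rw [show (Aw 0 ++ (Abar m ++ 0 :: 2 :: Aw n) : List Ltr)
          = Abar m ++ 0 :: 2 :: Aw n from rfl, pad1_abar]; decide
      | succ j =>
        rw [show (Aw (j+1) ++ (Abar m ++ 0 :: 2 :: Aw n) : List Ltr)
          = 1 :: 0 :: (Aw j ++ (Abar m ++ 0 :: 2 :: Aw n)) from rfl]
        simp [pad]
    rw [e, peel10 _ hp, ih, ← mul_assoc, ← wd_append]
    rfl
/-- `∂_{z,0}(A_s B̄_m e_z A_n) = A_s Ā_m e_z A_n - A_s B̄_{m+n}`. -/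
theorem del0_AsBbar (s m n : ℕ) (hs : 1 ≤ s) :
    del 0 (wd (Aw s ++ Bbar m ++ ezw ++ Aw n)) =
      wd (Aw s ++ Abar m ++ ezw ++ Aw n) - wd (Aw s ++ Bbar (m + n)) := by
  have e : (Aw s ++ Bbar m ++ ezw ++ Aw n : List Ltr)
      = Aw s ++ (Abar m ++ 0 :: 2 :: Aw n) := by
    simp [Bbar, ezw]
  rw [e, del_wd, main_aw, mul_sub, mul_sub,
    ← wd_append, ← wd_append, ← wd_append, ← wd_append]
  have h1 : (Aw s ++ (Abar m ++ 2 :: Aw n) : List Ltr) = Aw s ++ Abar m ++ ezw ++ Aw n := by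
    simp [ezw]
  have h2 : (Aw s ++ (Abar m ++ 0 :: Aw n) : List Ltr) = Aw s ++ Bbar (m + n) := by
    rw [bbar_merge]
  rw [h1, h2]

end
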